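/- Let ρ₁ ≥ ρ₂ ≥ ... ≥ ρ_M ≥ 0 with ∑ᵢ ρᵢ = 1 and M ≥ 2. Let m' be the smallest index such that ∑_{i≤m'} ρᵢ ≥ 1/2. Define m = m' - 1 if ∑_{i≤m'} ρᵢ - 1/2 > ρ_{m'}/2, and m = m' otherwise. Then with P₀ = ∑_{i≤m} ρᵢ and Δ = 2·P₀ - 1, we have |Δ| ≤ ρ_{m'} ≤ ρ₁, and both index sets {1,...,m} and {m+1,...,M} are nonempty. -/

import Mathlib

theorem top_rule_satisfies_sead (M : ℕ) (ρ : ℕ → ℝ) (m' m : ℕ) (P₀ Δ : ℝ)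
    (hM : 2 ≤ M)
    (hmono : ∀ i j, i ≤ j → j < M → ρ j ≤ ρ i)
    (hnn : ∀ i, i < M → 0 ≤ ρ i)
    (hsum : ∑ i ∈ Finset.range M, ρ i = 1)
    (hm'1 : 1 ≤ m') (hm'M : m' ≤ M)
    (hge : 1/2 ≤ ∑ i ∈ Finset.range m', ρ i)
    (hmin : ∀ k, k < m' → ∑ i ∈ Finset.range k, ρ i < 1/2)
    (hm : m = if (∑ i ∈ Finset.range m', ρ i) - 1/2 > ρ (m'-1) / 2 then m' - 1 else m')
    (hP0 : P₀ = ∑ i ∈ Finset.range m, ρ i)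
    (hΔ : Δ = 2 * P₀ - 1) :
    |Δ| ≤ ρ (m'-1) ∧ ρ (m'-1) ≤ ρ 0 ∧ 1 ≤ m ∧ m < M := by
  set S := ∑ i ∈ Finset.range m', ρ i with hS
  have hm1M : m' - 1 < M := by omega
  have hsplit : S = ∑ i ∈ Finset.range (m'-1), ρ i + ρ (m'-1) := by
    obtain ⟨k, hk⟩ : ∃ k, m' = k + 1 := ⟨m' - 1, by omega⟩
    rw [hS, hk]
    simp [Finset.sum_range_succ]
  have hprev : ∑ i ∈ Finset.range (m'-1), ρ i < 1/2 := hmin _ (by omega)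
  have hρnn : 0 ≤ ρ (m'-1) := hnn _ hm1M
  have hρ0 : ρ (m'-1) ≤ ρ 0 := hmono 0 _ (Nat.zero_le _) hm1M
  have hρ0le1 : ρ 0 ≤ 1 := by
    calc ρ 0 ≤ ∑ i ∈ Finset.range M, ρ i :=
          Finset.single_le_sum (fun i hi => hnn i (Finset.mem_range.mp hi))
            (Finset.mem_range.mpr (by omega))
      _ = 1 := hsum
  by_cases hc : S - 1/2 > ρ (m'-1) / 2
  · have hmval : m = m' - 1 := by rw [hm, if_pos hc]
    have hm'2 : 2 ≤ m' := by
      by_contra h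
      have h1 : m' = 1 := by omega
      have : S = ρ 0 := by rw [hS, h1, Finset.sum_range_one]
      rw [this] at hc
      have h0 : m' - 1 = 0 := by omega
      rw [h0] at hc
      linarith
    have hP : P₀ = ∑ i ∈ Finset.range (m'-1), ρ i := by rw [hP0, hmval]
    refine ⟨?_, hρ0, by omega, by omega⟩
    rw [abs_le]
    constructor <;> [linarith; linarith]
  · push_neg at hc
    have hmval : m = m' := by rw [hm, if_neg (by push_neg; exact hc)]
    have hP : P₀ = S := by rw [hP0, hmval]
    have hm'M' : m' < M := by
      by_contra h
      have hMm : m' = M := by omega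
      have hS1 : S = 1 := by rw [hS, hMm, hsum]
      have hρ1 : 1 ≤ ρ (m'-1) := by rw [hS1] at hc; linarith
      have h2 : ρ (M-2) ≤ ∑ i ∈ Finset.range (m'-1), ρ i := by
        apply Finset.single_le_sum (fun i hi => hnn i (by
          have := Finset.mem_range.mp hi; omega))
        exact Finset.mem_range.mpr (by omega)
      have h3 : ρ (m'-1) ≤ ρ (M-2) := hmono (M-2) (m'-1) (by omega) hm1M
      linarith
    refine ⟨?_, hρ0, by omega, by omega⟩
    rw [abs_le]
    constructor <;> linarith
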